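/- Wigner function of a Gaussian state: Let N be a positive natural number, let σ be a real symmetric positive-definite 2N×2N matrix, and let μ, x ∈ ℝ^{2N}. Then (2π)^{−2N} · ∫_{ℝ^{2N}} exp(i·xᵀΩr) · exp(−i·μᵀΩr) · exp(−(1/4)·rᵀΩᵀσΩr) dr = π^{−N} · (det σ)^{−1/2} · exp(−(x−μ)ᵀσ⁻¹(x−μ)). (That is, the symplectic Fourier transform of the Gaussian characteristic function with mean μ and covariance σ is the Gaussian Wigner function.) -/

import Mathlib

open Matrix Kronecker MeasureTheory

/-- The standard symplectic form `Ω = ⊕_{j=1}^N Ω₁` on `ℝ^{2N}`, with the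
`2N` coordinates indexed by `Fin N × Fin 2` (mode index, quadrature index). -/
noncomputable def Omega (N : ℕ) : Matrix (Fin N × Fin 2) (Fin N × Fin 2) ℝ :=
  (1 : Matrix (Fin N) (Fin N) ℝ) ⊗ₖ !![0, 1; -1, 0]

/-- The real bilinear form `uᵀ M v = ∑_{p,q} u_p M_{pq} v_q`. -/
def bilinForm {ι : Type*} [Fintype ι] (M : Matrix ι ι ℝ) (u v : ι → ℝ) : ℝ :=
  ∑ p, ∑ q, u p * M p q * v q

lemma bilinForm_eq {ι : Type*} [Fintype ι] (M : Matrix ι ι ℝ) (u v : ι → ℝ) :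
    bilinForm M u v = u ⬝ᵥ (M *ᵥ v) := by
  simp [bilinForm, dotProduct, mulVec, Finset.mul_sum, mul_assoc]

lemma Omega_transpose_mul (N : ℕ) : (Omega N)ᵀ * Omega N = 1 := by
  rw [Omega, ← Matrix.kroneckerMap_transpose, Matrix.transpose_one,
    ← Matrix.mul_kronecker_mul, Matrix.one_mul]
  have ht : (!![0, 1; -1, 0]ᵀ : Matrix (Fin 2) (Fin 2) ℝ) = !![0, -1; 1, 0] :=
    (Matrix.transposeᵣ_eq _).symm
  have : (!![0, 1; -1, 0]ᵀ * !![0, 1; -1, 0] : Matrix (Fin 2) (Fin 2) ℝ) = 1 := by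
    rw [ht]
    ext i j; fin_cases i <;> fin_cases j <;>
      norm_num [Matrix.mul_apply, Fin.sum_univ_two, Matrix.one_apply]
  rw [this, Matrix.one_kronecker_one]

lemma Omega_mul_transpose (N : ℕ) : Omega N * (Omega N)ᵀ = 1 := by
  rw [Omega, ← Matrix.kroneckerMap_transpose, Matrix.transpose_one,
    ← Matrix.mul_kronecker_mul, Matrix.one_mul]
  have ht : (!![0, 1; -1, 0]ᵀ : Matrix (Fin 2) (Fin 2) ℝ) = !![0, -1; 1, 0] :=
    (Matrix.transposeᵣ_eq _).symm
  have : (!![0, 1; -1, 0] * !![0, 1; -1, 0]ᵀ : Matrix (Fin 2) (Fin 2) ℝ) = 1 := by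
    rw [ht]
    ext i j; fin_cases i <;> fin_cases j <;>
      norm_num [Matrix.mul_apply, Fin.sum_univ_two, Matrix.one_apply]
  rw [this, Matrix.one_kronecker_one]

lemma integral_comp_mulVec {ι : Type*} [Fintype ι] [DecidableEq ι]
    (B : Matrix ι ι ℝ) (hB : IsUnit B.det) (g : (ι → ℝ) → ℂ) :
    ∫ r, g r = |B.det| • ∫ u, g (B *ᵥ u) := by
  have hInv : Invertible B := B.invertibleOfIsUnitDet hB
  let e₀ : (ι → ℝ) ≃ₗ[ℝ] (ι → ℝ) := B.toLinearEquiv' hInv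
  let e : (ι → ℝ) ≃L[ℝ] (ι → ℝ) := e₀.toContinuousLinearEquiv
  have hdet : LinearMap.det (e : (ι → ℝ) →ₗ[ℝ] (ι → ℝ)) = B.det := by
    have : (e : (ι → ℝ) →ₗ[ℝ] (ι → ℝ)) = Matrix.toLin' B := by
      ext v i
      simp [e, e₀, Matrix.toLinearEquiv']
    rw [this, LinearMap.det_toLin']
  have hdet0 : LinearMap.det (e : (ι → ℝ) →ₗ[ℝ] (ι → ℝ)) ≠ 0 := by
    rw [hdet]; exact hB.ne_zero
  have hmap : Measure.map (e : (ι → ℝ) →ₗ[ℝ] (ι → ℝ)) volume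
      = ENNReal.ofReal |B.det⁻¹| • volume := by
    rw [Measure.map_linearMap_addHaar_pi_eq_smul_addHaar hdet0, hdet]
  have hemb : MeasurableEmbedding (e : (ι → ℝ) → (ι → ℝ)) :=
    e.toHomeomorph.measurableEmbedding
  have hco : (⇑(e : (ι → ℝ) →ₗ[ℝ] (ι → ℝ)) : (ι → ℝ) → (ι → ℝ)) = ⇑e := rfl
  have h1 : ∫ u, g (B *ᵥ u) = ∫ y, g y ∂(Measure.map (e : (ι → ℝ) →ₗ[ℝ] (ι → ℝ)) volume) := by
    rw [hco, MeasurableEmbedding.integral_map hemb]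
    rfl
  rw [h1, hmap, integral_smul_measure]
  have habs : 0 ≤ |B.det⁻¹| := abs_nonneg _
  rw [ENNReal.toReal_ofReal habs]
  rw [smul_smul, abs_inv]
  rw [mul_inv_cancel₀ (abs_ne_zero.mpr hB.ne_zero), one_smul]

open scoped MatrixOrder in
lemma posSemidef_sqrt_aux {n : Type*} [Fintype n] [DecidableEq n] (M : Matrix n n ℝ)
    (hM : M.PosSemidef) : ∃ B : Matrix n n ℝ, B * B = M ∧ Bᵀ = B := by
  refine ⟨CFC.sqrt M, CFC.sqrt_mul_sqrt_self M hM.nonneg, ?_⟩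
  have := (CFC.sqrt_nonneg M).posSemidef.isHermitian
  rwa [Matrix.IsHermitian, Matrix.conjTranspose_eq_transpose_of_trivial] at this

/-- **Wigner function of a Gaussian state**: the symplectic Fourier transform
of the Gaussian characteristic function with mean `μ` and covariance `σ` is
the Gaussian Wigner function:
`(2π)^{−2N} ∫ exp(i xᵀΩr) exp(−i μᵀΩr) exp(−(1/4) rᵀΩᵀσΩr) dr
  = π^{−N} (det σ)^{−1/2} exp(−(x−μ)ᵀσ⁻¹(x−μ))`. -/
theorem wigner_of_gaussian (N : ℕ) (hN : 0 < N)
    (σ : Matrix (Fin N × Fin 2) (Fin N × Fin 2) ℝ) (hsymm : σᵀ = σ) (hσ : σ.PosDef)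
    (μ x : (Fin N × Fin 2) → ℝ) :
    (((2 * Real.pi) ^ (2 * N) : ℝ)⁻¹ : ℂ) *
      ∫ r : (Fin N × Fin 2) → ℝ,
        Complex.exp (Complex.I * (bilinForm (Omega N) x r : ℝ)) *
        Complex.exp (-Complex.I * (bilinForm (Omega N) μ r : ℝ)) *
        Complex.exp (-(1 / 4 : ℂ) * (bilinForm ((Omega N)ᵀ * σ * Omega N) r r : ℝ))
      = (((Real.pi ^ N : ℝ)⁻¹ / Real.sqrt σ.det) *
          Real.exp (-(bilinForm σ⁻¹ (x - μ) (x - μ))) : ℝ) := by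
  set Ω := Omega N with hΩdef
  have hΩ1 : Ωᵀ * Ω = 1 := Omega_transpose_mul N
  have hΩ2 : Ω * Ωᵀ = 1 := Omega_mul_transpose N
  set A := Ωᵀ * σ * Ω with hAdef
  -- A is positive definite
  have hAsymm : Aᵀ = A := by
    rw [hAdef, Matrix.transpose_mul, Matrix.transpose_mul, Matrix.transpose_transpose, hsymm,
      Matrix.mul_assoc]
  have hA : A.PosDef := by
    refine Matrix.PosDef.of_dotProduct_mulVec_pos ?_ ?_
    · rw [Matrix.IsHermitian, Matrix.conjTranspose_eq_transpose_of_trivial, hAsymm]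
    · intro v hv
      have hy : Ω *ᵥ v ≠ 0 := by
        intro h
        apply hv
        have : Ωᵀ *ᵥ (Ω *ᵥ v) = v := by
          rw [Matrix.mulVec_mulVec, hΩ1, Matrix.one_mulVec]
        rw [h, Matrix.mulVec_zero] at this
        exact this.symm
      have hpos := hσ.dotProduct_mulVec_pos hy
      have heq : v ⬝ᵥ (A *ᵥ v) = (Ω *ᵥ v) ⬝ᵥ (σ *ᵥ (Ω *ᵥ v)) := by
        rw [hAdef, ← Matrix.mulVec_mulVec, ← Matrix.mulVec_mulVec,
          Matrix.dotProduct_mulVec v, Matrix.vecMul_transpose]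
      simp only [star_trivial] at hpos ⊢
      rw [heq]
      exact hpos
  have hσdet : IsUnit σ.det := isUnit_iff_ne_zero.mpr (ne_of_gt hσ.det_pos)
  have hAdet : A.det = σ.det := by
    have h1 : Ω.det * Ω.det = 1 := by
      have := congrArg Matrix.det hΩ1
      rwa [Matrix.det_mul, Matrix.det_transpose, Matrix.det_one] at this
    rw [hAdef, Matrix.det_mul, Matrix.det_mul, Matrix.det_transpose]
    have h2 : Ω.det * σ.det * Ω.det = (Ω.det * Ω.det) * σ.det := by ring
    rw [h2, h1, one_mul]
  -- B = sqrt of A⁻¹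
  have hAinv : A⁻¹.PosDef := hA.inv
  obtain ⟨B, hBB, hBsymm⟩ := posSemidef_sqrt_aux _ hAinv.posSemidef
  have hAunit : IsUnit A.det := by rw [hAdet]; exact hσdet
  have hAAinv : A * A⁻¹ = 1 := Matrix.mul_nonsing_inv A hAunit
  have hAinvA : A⁻¹ * A = 1 := Matrix.nonsing_inv_mul A hAunit
  -- B commutes with A
  have hcomm : A * B = B * A := by
    have h1 : B * A⁻¹ = A⁻¹ * B := by
      rw [← hBB, Matrix.mul_assoc, ← Matrix.mul_assoc]
    calc A * B = A * B * (A⁻¹ * A) := by rw [hAinvA, Matrix.mul_one]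
    _ = A * (B * A⁻¹) * A := by simp only [Matrix.mul_assoc]
    _ = A * (A⁻¹ * B) * A := by rw [h1]
    _ = (A * A⁻¹) * B * A := by simp only [Matrix.mul_assoc]
    _ = B * A := by rw [hAAinv, Matrix.one_mul]
  have hBAB : B * A * B = 1 := by
    calc B * A * B = A * B * B := by rw [hcomm]
    _ = A * (B * B) := by rw [Matrix.mul_assoc]
    _ = 1 := by rw [hBB, hAAinv]
  -- determinant of B
  have hBdet2 : B.det ^ 2 = σ.det⁻¹ := by
    have := congrArg Matrix.det hBB
    rw [Matrix.det_mul, Matrix.det_nonsing_inv, hAdet, Ring.inverse_eq_inv] at this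
    rw [sq, this]
  have hBdet0 : B.det ≠ 0 := by
    intro h
    rw [h] at hBdet2
    simp at hBdet2
    exact (ne_of_gt hσ.det_pos) hBdet2.symm
  have hBunit : IsUnit B.det := isUnit_iff_ne_zero.mpr hBdet0
  have hBabs : |B.det| = (Real.sqrt σ.det)⁻¹ := by
    rw [← Real.sqrt_sq_eq_abs, hBdet2, Real.sqrt_inv]
  -- A⁻¹ = Ωᵀ σ⁻¹ Ω and (Ω B)(Ω B)ᵀ = σ⁻¹
  have hAinv_eq : A⁻¹ = Ωᵀ * σ⁻¹ * Ω := by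
    apply Matrix.inv_eq_right_inv
    rw [hAdef]
    have hσσ : σ * σ⁻¹ = 1 := Matrix.mul_nonsing_inv σ hσdet
    calc Ωᵀ * σ * Ω * (Ωᵀ * σ⁻¹ * Ω)
        = Ωᵀ * (σ * ((Ω * Ωᵀ) * (σ⁻¹ * Ω))) := by simp only [Matrix.mul_assoc]
    _ = Ωᵀ * (σ * (σ⁻¹ * Ω)) := by rw [hΩ2, Matrix.one_mul]
    _ = Ωᵀ * ((σ * σ⁻¹) * Ω) := by simp only [Matrix.mul_assoc]
    _ = Ωᵀ * Ω := by rw [hσσ, Matrix.one_mul]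
    _ = 1 := hΩ1
  have hMMt : (Ω * B) * (Ω * B)ᵀ = σ⁻¹ := by
    rw [Matrix.transpose_mul, hBsymm]
    calc Ω * B * (B * Ωᵀ) = Ω * ((B * B) * Ωᵀ) := by simp only [Matrix.mul_assoc]
    _ = Ω * (Ωᵀ * σ⁻¹ * Ω * Ωᵀ) := by rw [hBB, hAinv_eq]
    _ = (Ω * Ωᵀ) * (σ⁻¹ * (Ω * Ωᵀ)) := by simp only [Matrix.mul_assoc]
    _ = σ⁻¹ := by rw [hΩ2, Matrix.one_mul, Matrix.mul_one]
  -- the linear coefficient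
  set t : (Fin N × Fin 2) → ℝ := x - μ with htdef
  set c : (Fin N × Fin 2) → ℝ := (Ω * B)ᵀ *ᵥ t with hcdef
  have hsum_c_sq : ∑ i, c i ^ 2 = bilinForm σ⁻¹ t t := by
    have : ∑ i, c i ^ 2 = c ⬝ᵥ c := by simp [dotProduct, sq]
    rw [this, hcdef, bilinForm_eq]
    rw [Matrix.dotProduct_mulVec, Matrix.vecMul_transpose, Matrix.mulVec_mulVec, hMMt,
      dotProduct_comm]
  -- pointwise identity for the integrand
  have key : ∀ u : (Fin N × Fin 2) → ℝ,
      Complex.exp (Complex.I * (bilinForm Ω x (B *ᵥ u) : ℝ)) *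
        Complex.exp (-Complex.I * (bilinForm Ω μ (B *ᵥ u) : ℝ)) *
        Complex.exp (-(1 / 4 : ℂ) * (bilinForm A (B *ᵥ u) (B *ᵥ u) : ℝ))
      = Complex.exp (-∑ i, (1/4 : ℂ) * (u i : ℂ) ^ 2 + ∑ i, (Complex.I * (c i : ℝ)) * u i) := by
    intro u
    have f1 : bilinForm Ω x (B *ᵥ u) - bilinForm Ω μ (B *ᵥ u) = ∑ i, c i * u i := by
      have hlin : bilinForm Ω x (B *ᵥ u) - bilinForm Ω μ (B *ᵥ u)
          = bilinForm Ω t (B *ᵥ u) := by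
        simp [bilinForm, htdef, Pi.sub_apply, sub_mul, Finset.sum_sub_distrib]
      rw [hlin, bilinForm_eq, Matrix.mulVec_mulVec, Matrix.dotProduct_mulVec, hcdef,
        ← Matrix.mulVec_transpose]
      simp [dotProduct]
    have f2 : bilinForm A (B *ᵥ u) (B *ᵥ u) = ∑ i, u i ^ 2 := by
      rw [bilinForm_eq, Matrix.mulVec_mulVec, Matrix.dotProduct_mulVec, ← hBsymm,
        Matrix.mulVec_transpose, Matrix.vecMul_vecMul]
      have hB3 : B * (A * Bᵀ) = 1 := by rw [hBsymm, ← Matrix.mul_assoc, hBAB]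
      rw [hB3, Matrix.vecMul_one]
      simp [dotProduct, sq]
    rw [← Complex.exp_add, ← Complex.exp_add]
    congr 1
    have f1' : ((bilinForm Ω x (B *ᵥ u) : ℝ) : ℂ) - ((bilinForm Ω μ (B *ᵥ u) : ℝ) : ℂ)
        = ∑ i, (c i : ℂ) * (u i : ℂ) := by
      rw [← Complex.ofReal_sub, f1]
      push_cast
      ring
    have f2' : ((bilinForm A (B *ᵥ u) (B *ᵥ u) : ℝ) : ℂ) = ∑ i, (u i : ℂ) ^ 2 := by
      rw [f2]
      push_cast
      ring
    calc Complex.I * (bilinForm Ω x (B *ᵥ u) : ℝ) + -Complex.I * (bilinForm Ω μ (B *ᵥ u) : ℝ)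
          + -(1 / 4 : ℂ) * (bilinForm A (B *ᵥ u) (B *ᵥ u) : ℝ)
        = Complex.I * (((bilinForm Ω x (B *ᵥ u) : ℝ) : ℂ) - ((bilinForm Ω μ (B *ᵥ u) : ℝ) : ℂ))
          - (1 / 4 : ℂ) * ((bilinForm A (B *ᵥ u) (B *ᵥ u) : ℝ) : ℂ) := by ring
    _ = Complex.I * (∑ i, (c i : ℂ) * (u i : ℂ)) - (1 / 4 : ℂ) * ∑ i, (u i : ℂ) ^ 2 := by
        rw [f1', f2']
    _ = -∑ i, (1/4 : ℂ) * (u i : ℂ) ^ 2 + ∑ i, (Complex.I * (c i : ℝ)) * u i := by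
        rw [Finset.mul_sum, Finset.mul_sum, ← Finset.sum_sub_distrib, ← Finset.sum_neg_distrib,
          ← Finset.sum_add_distrib]
        exact Finset.sum_congr rfl (fun i _ => by ring)
  -- change of variables
  rw [integral_comp_mulVec B hBunit]
  have hint : (∫ u : (Fin N × Fin 2) → ℝ,
      Complex.exp (Complex.I * (bilinForm Ω x (B *ᵥ u) : ℝ)) *
        Complex.exp (-Complex.I * (bilinForm Ω μ (B *ᵥ u) : ℝ)) *
        Complex.exp (-(1 / 4 : ℂ) * (bilinForm A (B *ᵥ u) (B *ᵥ u) : ℝ)))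
      = ∫ u : (Fin N × Fin 2) → ℝ,
        Complex.exp (-∑ i, (1/4 : ℂ) * (u i : ℂ) ^ 2 + ∑ i, (Complex.I * (c i : ℝ)) * u i) := by
    congr 1
    funext u
    exact key u
  rw [hint]
  have hquarter : ∀ i : Fin N × Fin 2, (0 : ℝ) < ((1/4 : ℂ)).re := fun _ => by norm_num
  rw [GaussianFourier.integral_cexp_neg_sum_mul_add hquarter (fun i => Complex.I * (c i : ℝ))]
  -- simplify the product
  have hprod : (∏ i : Fin N × Fin 2, ((Real.pi : ℂ) / (1/4 : ℂ)) ^ (1/2 : ℂ) *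
        Complex.exp ((Complex.I * (c i : ℝ)) ^ 2 / (4 * (1/4 : ℂ))))
      = ((4 * Real.pi : ℝ) ^ N : ℝ) * Complex.exp (-(bilinForm σ⁻¹ t t : ℝ)) := by
    rw [Finset.prod_mul_distrib, Finset.prod_const, ← Complex.exp_sum]
    have hcard : Fintype.card (Fin N × Fin 2) = 2 * N := by simp [Fintype.card_prod, mul_comm]
    rw [Finset.card_univ, hcard]
    congr 1
    · -- ((π/(1/4))^(1/2))^(2N) = (4π)^N
      have hbase : ((Real.pi : ℂ) / (1/4 : ℂ)) = ((4 * Real.pi : ℝ) : ℂ) := by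
        push_cast; ring
      rw [hbase]
      have h4π : (0 : ℝ) ≤ 4 * Real.pi := by positivity
      have hhalf : (1/2 : ℂ) = ((1/2 : ℝ) : ℂ) := by norm_num
      rw [hhalf, ← Complex.ofReal_cpow h4π]
      rw [← Complex.ofReal_pow]
      congr 1
      rw [← Real.rpow_natCast ((4 * Real.pi) ^ (1/2 : ℝ)) (2 * N), ← Real.rpow_natCast (4 * Real.pi) N]
      rw [← Real.rpow_mul h4π]
      congr 1
      push_cast
      ring
    · congr 1
      have : ∀ i : Fin N × Fin 2, (Complex.I * (c i : ℝ)) ^ 2 / (4 * (1/4 : ℂ)) = -((c i : ℝ) : ℂ) ^ 2 := by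
        intro i
        rw [mul_pow, Complex.I_sq]
        ring
      rw [Finset.sum_congr rfl (fun i _ => this i)]
      rw [Finset.sum_neg_distrib, ← hsum_c_sq]
      push_cast
      ring
  rw [hprod]
  -- final numeric computation
  rw [hBabs, Complex.real_smul]
  have hπ : (0 : ℝ) < Real.pi := Real.pi_pos
  have hsqrtσ : (0 : ℝ) < Real.sqrt σ.det := Real.sqrt_pos.mpr hσ.det_pos
  have hπC : (Real.pi : ℂ) ≠ 0 := by exact_mod_cast Real.pi_ne_zero
  have hsC : ((Real.sqrt σ.det : ℝ) : ℂ) ≠ 0 := by exact_mod_cast (ne_of_gt hsqrtσ)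
  rw [Complex.ofReal_mul, Complex.ofReal_exp]
  push_cast
  field_simp
  have h4 : ((2 : ℂ) * Real.pi) ^ (2 * N) = (4 * Real.pi) ^ N * (Real.pi : ℂ) ^ N := by
    rw [pow_mul, ← mul_pow]
    congr 1
    ring
  rw [h4]
  ring
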